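/- Let G be a connected leafless graph and let S be the set of all bridges of G. Then the induced group homomorphism Aut(G) → Aut(G/S) is injective. -/

import Mathlib

/-- A finite undirected multigraph (allowing loops and multiple edges) on a vertex type `V`
and an edge type `E`: the map `ends` assigns to each edge its unordered pair of endpoints
(a loop is an edge whose two endpoints coincide). -/
structure Multigraph (V E : Type) where
  ends : E → Sym2 V

namespace Multigraph

variable {V E : Type} {G : Multigraph V E}

/-- An automorphism of a multigraph: a pair of bijections on vertices and edges
commuting with the incidence map. -/
structure Aut (G : Multigraph V E) where
  toV : Equiv.Perm V
  toE : Equiv.Perm E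
  ends_map : ∀ e, G.ends (toE e) = Sym2.map toV (G.ends e)

theorem Aut.ext' {f g : G.Aut} (hV : f.toV = g.toV) (hE : f.toE = g.toE) : f = g := by
  cases f; cases g; simp_all

/-- The automorphisms of a multigraph form a group under composition. -/
instance : Group G.Aut where
  one := ⟨1, 1, fun e => by simp⟩
  mul f g := ⟨f.toV * g.toV, f.toE * g.toE, fun e => by
    simp only [Equiv.Perm.mul_apply, f.ends_map, g.ends_map, Sym2.map_map, Equiv.Perm.coe_mul]⟩
  inv f := ⟨f.toV⁻¹, f.toE⁻¹, fun e => by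
    have h := f.ends_map (f.toE⁻¹ e)
    rw [show f.toE (f.toE⁻¹ e) = e by simp] at h
    rw [h, Sym2.map_map]
    have : (⇑f.toV⁻¹ ∘ ⇑f.toV) = id := by ext v; simp
    rw [this, Sym2.map_id, id_eq]⟩
  mul_assoc f g h := Aut.ext' (mul_assoc _ _ _) (mul_assoc _ _ _)
  one_mul f := Aut.ext' (one_mul _) (one_mul _)
  mul_one f := Aut.ext' (mul_one _) (mul_one _)
  inv_mul_cancel f := Aut.ext' (inv_mul_cancel _) (inv_mul_cancel _)

/-- The relation on vertices generated by a set `S` of edges: two vertices are related if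
some edge of `S` joins them.  The vertex set of the contraction `G/S` is the quotient of
`V` by the equivalence relation generated by this relation. -/
def contractRel (G : Multigraph V E) (S : Set E) : V → V → Prop :=
  fun a b => ∃ e ∈ S, G.ends e = s(a, b)

/-- The contraction `G/S` of a multigraph `G` along a set `S` of edges: its vertices are
the equivalence classes of vertices of `G` under the equivalence relation generated by the
endpoints of edges of `S`, its edges are the edges of `G` not in `S`, and its incidence map
is induced by that of `G`. -/
def contract (G : Multigraph V E) (S : Set E) :
    Multigraph (Quot (G.contractRel S)) {e : E // e ∉ S} :=
  ⟨fun e => Sym2.map (Quot.mk (G.contractRel S)) (G.ends e.1)⟩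

end Multigraph

namespace Multigraph

variable {V E : Type} (G : Multigraph V E)

/-- Degree of the vertex `v` with respect to the edge set `F` (loops counted twice):
the number of edges of `F` incident to `v`, plus the number of loops of `F` at `v`. -/
noncomputable def degIn (F : Set E) (v : V) : ℕ :=
  {e ∈ F | v ∈ G.ends e}.ncard + {e ∈ F | G.ends e = s(v, v)}.ncard

/-- Degree of a vertex (loops counted twice). -/
noncomputable def degree (v : V) : ℕ := G.degIn Set.univ v

/-- A graph is leafless if every vertex has degree at least two. -/
def Leafless : Prop := ∀ v, 2 ≤ G.degree v

/-- Adjacency: there is an edge with endpoints `u`, `v`. -/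
def Adj (u v : V) : Prop := ∃ e, G.ends e = s(u, v)

/-- A graph is connected if it is nonempty and every two vertices are joined by a walk. -/
def Connected : Prop := Nonempty V ∧ ∀ u v : V, Relation.ReflTransGen G.Adj u v

/-- Adjacency using only edges outside the edge set `F`. -/
def AdjOff (F : Set E) (u v : V) : Prop := ∃ e, e ∉ F ∧ G.ends e = s(u, v)

/-- An edge is a bridge if its endpoints are not joined by a walk avoiding it;
equivalently, its deletion increases the number of connected components. -/
def IsBridge (e : E) : Prop :=
  ∃ u v, G.ends e = s(u, v) ∧ ¬ Relation.ReflTransGen (G.AdjOff {e}) u v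

end Multigraph


/-! ### Auxiliary development -/

namespace Multigraph

variable {V E : Type} {G : Multigraph V E}

/-- Walks recorded as lists of edges, restricted to an edge set `A`. -/
inductive Walk (G : Multigraph V E) (A : Set E) : V → List E → V → Prop
  | nil (u : V) : Walk G A u [] u
  | cons {u w v : V} {e : E} {l : List E} (he : e ∈ A) (hends : G.ends e = s(u, w))
      (hw : Walk G A w l v) : Walk G A u (e :: l) v

theorem Walk.mono {A B : Set E} (hAB : A ⊆ B) {u v : V} {l : List E}
    (h : G.Walk A u l v) : G.Walk B u l v := by
  induction h with
  | nil u => exact .nil u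
  | cons he hends _ ih => exact .cons (hAB he) hends ih

theorem Walk.append {A : Set E} {l₂ : List E} {v : V} :
    ∀ {u m : V} {l₁ : List E}, G.Walk A u l₁ m → G.Walk A m l₂ v →
      G.Walk A u (l₁ ++ l₂) v := by
  intro u m l₁ h1
  induction h1 with
  | nil u => exact fun h2 => h2
  | cons he hends hw ih => exact fun h2 => .cons he hends (ih h2)

theorem Walk.reverse {A : Set E} {u v : V} {l : List E} (h : G.Walk A u l v) :
    G.Walk A v l.reverse u := by
  induction h with
  | nil u => exact .nil u
  | cons he hends _ ih =>
    rw [List.reverse_cons]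
    exact ih.append (.cons he (hends.trans Sym2.eq_swap) (.nil _))

theorem Walk.restrict {A : Set E} {b : E} {u v : V} {l : List E}
    (h : G.Walk A u l v) (hb : ∀ e ∈ l, e ≠ b) : G.Walk {e | e ≠ b} u l v := by
  induction h with
  | nil u => exact .nil u
  | cons he hends _ ih =>
    exact .cons (hb _ List.mem_cons_self) hends
      (ih fun e' he' => hb e' (List.mem_cons_of_mem _ he'))

theorem Walk.append_split {A : Set E} {v : V} :
    ∀ (l₁ : List E) {u : V} {l₂ : List E}, G.Walk A u (l₁ ++ l₂) v →
      ∃ m, G.Walk A u l₁ m ∧ G.Walk A m l₂ v := by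
  intro l₁
  induction l₁ with
  | nil => exact fun {u l₂} h => ⟨u, .nil u, h⟩
  | cons e l₁ ih =>
    intro u l₂ h
    rw [List.cons_append] at h
    cases h with
    | cons he hends hw =>
      obtain ⟨m, h1, h2⟩ := ih hw
      exact ⟨m, .cons he hends h1, h2⟩

/-- Splitting a walk at an edge `b` with endpoints `x, y`: either the walk can avoid `b`
entirely, or an initial portion avoiding `b` reaches `x` or `y`. -/
theorem Walk.split {A : Set E} {b : E} {x y : V} (hb : G.ends b = s(x, y)) :
    ∀ {u v : V} {l : List E}, G.Walk A u l v →
      (∃ l', G.Walk (A ∩ {e | e ≠ b}) u l' v) ∨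
        (∃ l', G.Walk (A ∩ {e | e ≠ b}) u l' x) ∨
          (∃ l', G.Walk (A ∩ {e | e ≠ b}) u l' y) := by
  intro u v l h
  induction h with
  | nil u => exact .inl ⟨[], .nil u⟩
  | cons he hends hw ih =>
    rename_i u w v e l
    by_cases hc : e = b
    · have h2 : s(u, w) = s(x, y) := by rw [← hends, hc, hb]
      rcases Sym2.eq_iff.mp h2 with ⟨h3, -⟩ | ⟨h3, -⟩
      · exact .inr (.inl ⟨[], h3 ▸ Walk.nil u⟩)
      · exact .inr (.inr ⟨[], h3 ▸ Walk.nil u⟩)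
    · rcases ih with ⟨l', hl'⟩ | ⟨l', hl'⟩ | ⟨l', hl'⟩
      · exact .inl ⟨e :: l', .cons ⟨he, hc⟩ hends hl'⟩
      · exact .inr (.inl ⟨e :: l', .cons ⟨he, hc⟩ hends hl'⟩)
      · exact .inr (.inr ⟨e :: l', .cons ⟨he, hc⟩ hends hl'⟩)

/-- Connectivity avoiding the edge `b`. -/
def Conn (G : Multigraph V E) (b : E) (u v : V) : Prop :=
  Relation.ReflTransGen (G.AdjOff {b}) u v

theorem AdjOff.symm {F : Set E} {u v : V} (h : G.AdjOff F u v) : G.AdjOff F v u := by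
  obtain ⟨e, he, hev⟩ := h
  exact ⟨e, he, hev.trans Sym2.eq_swap⟩

theorem Conn.refl {b : E} {u : V} : G.Conn b u u := Relation.ReflTransGen.refl

theorem Conn.symm {b : E} {u v : V} (h : G.Conn b u v) : G.Conn b v u :=
  Std.Symm.symm (self := @Relation.ReflTransGen.stdSymm _ _ ⟨fun _ _ h' => AdjOff.symm h'⟩) _ _ h

theorem Conn.trans {b : E} {u v w : V} (h1 : G.Conn b u v) (h2 : G.Conn b v w) :
    G.Conn b u w := Relation.ReflTransGen.trans h1 h2

theorem conn_iff_walk {b : E} {u v : V} :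
    G.Conn b u v ↔ ∃ l, G.Walk {e | e ≠ b} u l v := by
  constructor
  · intro h
    induction h with
    | refl => exact ⟨[], .nil u⟩
    | tail _ h2 ih =>
      obtain ⟨l, hl⟩ := ih
      obtain ⟨e, hne, hev⟩ := h2
      refine ⟨l ++ [e], hl.append (.cons ?_ hev (.nil _))⟩
      simpa using hne
  · rintro ⟨l, hl⟩
    induction hl with
    | nil => exact Relation.ReflTransGen.refl
    | cons he hends _ ih =>
      exact Relation.ReflTransGen.head ⟨_, by simpa using he, hends⟩ ih

theorem conn_of_edge {b e : E} {u v : V} (hne : e ≠ b) (h : G.ends e = s(u, v)) :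
    G.Conn b u v :=
  Relation.ReflTransGen.single ⟨e, by simpa using hne, h⟩

theorem not_conn_of_bridge {b : E} {x y : V} (hb : G.IsBridge b)
    (hxy : G.ends b = s(x, y)) : ¬ G.Conn b x y := by
  obtain ⟨u, v, huv, hn⟩ := hb
  have h2 : s(u, v) = s(x, y) := by rw [← huv, hxy]
  rcases Sym2.eq_iff.mp h2 with ⟨rfl, rfl⟩ | ⟨rfl, rfl⟩
  · exact hn
  · exact fun h => hn h.symm

theorem not_bridge_of_parallel {e₁ e₂ : E} (hne : e₂ ≠ e₁) (h : G.ends e₂ = G.ends e₁) :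
    ¬ G.IsBridge e₁ := by
  rintro ⟨u, v, huv, hn⟩
  exact hn (Relation.ReflTransGen.single ⟨e₂, by simpa using hne, h.trans huv⟩)

theorem not_bridge_loop {e : E} {u : V} (h : G.ends e = s(u, u)) : ¬ G.IsBridge e := by
  rintro ⟨x, y, hxy, hn⟩
  have h2 : s(x, y) = s(u, u) := by rw [← hxy, h]
  rcases Sym2.eq_iff.mp h2 with ⟨rfl, rfl⟩ | ⟨rfl, rfl⟩ <;> exact hn Relation.ReflTransGen.refl

theorem exists_pair_eq (z : Sym2 V) : ∃ x y : V, z = s(x, y) :=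
  Sym2.ind (fun x y => ⟨x, y, rfl⟩) z

theorem walk_univ_of_rtg {u v : V} (h : Relation.ReflTransGen G.Adj u v) :
    ∃ l, G.Walk Set.univ u l v := by
  induction h with
  | refl => exact ⟨[], .nil u⟩
  | tail _ h2 ih =>
    obtain ⟨l, hl⟩ := ih
    obtain ⟨e, hev⟩ := h2
    exact ⟨l ++ [e], hl.append (.cons (Set.mem_univ e) hev (.nil _))⟩

/-- Every vertex is on one of the two sides of any edge. -/
theorem conn_two (hconn : G.Connected) {b : E} {x y : V} (hb : G.ends b = s(x, y))
    (u : V) : G.Conn b u x ∨ G.Conn b u y := by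
  obtain ⟨l, hl⟩ := walk_univ_of_rtg (hconn.2 u x)
  rcases hl.split hb with ⟨l', hl'⟩ | ⟨l', hl'⟩ | ⟨l', hl'⟩
  · exact .inl (conn_iff_walk.mpr ⟨l', hl'.mono Set.inter_subset_right⟩)
  · exact .inl (conn_iff_walk.mpr ⟨l', hl'.mono Set.inter_subset_right⟩)
  · exact .inr (conn_iff_walk.mpr ⟨l', hl'.mono Set.inter_subset_right⟩)

theorem walk_of_eqvGen {S : Set E} {u v : V}
    (h : Relation.EqvGen (G.contractRel S) u v) : ∃ l, G.Walk S u l v := by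
  induction h with
  | rel u v huv =>
    obtain ⟨e, heS, he⟩ := huv
    exact ⟨[e], .cons heS he (.nil v)⟩
  | refl u => exact ⟨[], .nil u⟩
  | symm u v _ ih =>
    obtain ⟨l, hl⟩ := ih
    exact ⟨l.reverse, hl.reverse⟩
  | trans u v w _ _ ih1 ih2 =>
    obtain ⟨l₁, h1⟩ := ih1
    obtain ⟨l₂, h2⟩ := ih2
    exact ⟨l₁ ++ l₂, h1.append h2⟩

theorem exists_first_split {α : Type*} {a : α} :
    ∀ {l : List α}, a ∈ l → ∃ s t, l = s ++ a :: t ∧ a ∉ s := by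
  intro l h
  induction l with
  | nil => cases h
  | cons x l ih =>
    by_cases hx : a = x
    · exact ⟨[], l, by rw [hx]; rfl, by simp⟩
    · have hal : a ∈ l := by
        rcases List.mem_cons.mp h with h' | h'
        · exact absurd h' hx
        · exact h'
      obtain ⟨s, t, hst, hns⟩ := ih hal
      exact ⟨x :: s, t, by rw [hst]; rfl, by simp [hns, hx]⟩

/-- **Key separation lemma**: if `u ≠ v` are joined by a walk of bridges, then some bridge
separates them. -/
theorem exists_sep_bridge :
    ∀ (n : ℕ) {l : List E} {u v : V}, l.length ≤ n →
      G.Walk {e | G.IsBridge e} u l v → u ≠ v →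
        ∃ b, G.IsBridge b ∧ ¬ G.Conn b u v := by
  intro n
  induction n with
  | zero =>
    intro l u v hlen h hne
    obtain rfl := List.length_eq_zero_iff.mp (Nat.le_zero.mp hlen)
    cases h
    exact absurd rfl hne
  | succ n ih =>
    intro l u v hlen h hne
    cases h with
    | nil => exact absurd rfl hne
    | cons he hends hw =>
      rename_i w e l'
      by_cases hcv : G.Conn e u v
      · have hnuw : ¬ G.Conn e u w := not_conn_of_bridge he hends
        by_cases hel : e ∈ l'
        · obtain ⟨l₁, l₂, rfl, hnl1⟩ := exists_first_split hel
          obtain ⟨a, h1, h2⟩ := hw.append_split l₁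
          cases h2 with
          | cons he2 hends2 hw2 =>
            rename_i c
            have h3 : s(u, w) = s(a, c) := by rw [← hends, hends2]
            have hcwa : G.Conn e w a :=
              conn_iff_walk.mpr ⟨l₁, h1.restrict fun e' he' h' => hnl1 (h' ▸ he')⟩
            rcases Sym2.eq_iff.mp h3 with ⟨rfl, rfl⟩ | ⟨rfl, rfl⟩
            · exact absurd hcwa.symm hnuw
            · refine ih ?_ hw2 hne
              simp only [List.length_cons, List.length_append] at hlen
              omega
        · have hcwv : G.Conn e w v :=
            conn_iff_walk.mpr ⟨l', hw.restrict fun e' he' h' => hel (h' ▸ he')⟩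
          exact absurd (hcv.trans hcwv.symm) hnuw
      · exact ⟨e, he, hcv⟩

/-- **Each side of any edge contains a vertex incident to a non-bridge edge**, in a
leafless graph. -/
theorem side_has_nonbridge [Fintype V] [Fintype E] (hleaf : G.Leafless) :
    ∀ (n : ℕ) (b : E) (x y : V), G.ends b = s(x, y) →
      {u | G.Conn b u y}.ncard ≤ n →
        ∃ u, G.Conn b u y ∧ ∃ e, ¬ G.IsBridge e ∧ u ∈ G.ends e := by
  intro n
  induction n with
  | zero =>
    intro b x y hb h0
    exfalso
    have hy : y ∈ {u | G.Conn b u y} := Conn.refl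
    have := Set.ncard_eq_zero (Set.toFinite _) |>.mp (Nat.le_zero.mp h0)
    rw [this] at hy
    exact hy
  | succ n ih =>
    intro b x y hb hcard
    by_cases hy : ∃ e, ¬ G.IsBridge e ∧ y ∈ G.ends e
    · exact ⟨y, Conn.refl, hy⟩
    · push_neg at hy
      have hall : ∀ e, y ∈ G.ends e → G.IsBridge e := by
        intro e hye
        by_contra hbe
        exact hy e hbe hye
      -- no loops at y
      have hnoloop : {e ∈ (Set.univ : Set E) | G.ends e = s(y, y)} = ∅ := by
        ext e
        simp only [Set.mem_setOf_eq, Set.mem_empty_iff_false, iff_false, Set.mem_univ,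
          true_and, not_and]
        intro hloop
        exact absurd (hall e (by rw [hloop]; exact Sym2.mem_mk_left y y)) (not_bridge_loop hloop)
      have hdeg := hleaf y
      rw [degree, degIn, hnoloop, Set.ncard_empty, add_zero] at hdeg
      have h2 : 1 < {e ∈ (Set.univ : Set E) | y ∈ G.ends e}.ncard := hdeg
      obtain ⟨e₁, he₁, e₂, he₂, hne12⟩ := (Set.one_lt_ncard (Set.toFinite _)).mp h2
      simp only [Set.mem_setOf_eq, Set.mem_univ, true_and] at he₁ he₂
      obtain ⟨z₁, hz₁⟩ := Sym2.mem_iff_exists.mp he₁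
      obtain ⟨z₂, hz₂⟩ := Sym2.mem_iff_exists.mp he₂
      have hz12 : z₁ ≠ z₂ := by
        intro h
        exact not_bridge_of_parallel hne12 (by rw [hz₁, hz₂, h]) (hall e₂ he₂)
      obtain ⟨b', z, hbz, hzx⟩ : ∃ b' z, G.ends b' = s(y, z) ∧ z ≠ x := by
        by_cases h1 : z₁ = x
        · exact ⟨e₂, z₂, hz₂, fun h => hz12 (h1.trans h.symm)⟩
        · exact ⟨e₁, z₁, hz₁, h1⟩
      have hbrb' : G.IsBridge b' := hall b' (by rw [hbz]; exact Sym2.mem_mk_left y z)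
      have hzy : z ≠ y := by
        intro h
        exact not_bridge_loop (h ▸ hbz) hbrb'
      have hb'b : b' ≠ b := by
        intro h
        have : s(y, z) = s(x, y) := by rw [← hbz, h, hb]
        rcases Sym2.eq_iff.mp this with ⟨_, h2⟩ | ⟨_, h2⟩
        · exact hzy h2
        · exact hzx h2
      have hnyz : ¬ G.Conn b' y z := not_conn_of_bridge hbrb' hbz
      have hsub : {u | G.Conn b' u z} ⊆ {u | G.Conn b u y} := by
        intro u hu
        obtain ⟨l, hl⟩ := conn_iff_walk.mp hu
        rcases hl.split hb with ⟨l', hl'⟩ | ⟨l', hl'⟩ | ⟨l', hl'⟩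
        · have hcuz : G.Conn b u z :=
            conn_iff_walk.mpr ⟨l', hl'.mono Set.inter_subset_right⟩
          exact hcuz.trans (conn_of_edge hb'b hbz).symm
        · -- reached x avoiding both b and b'
          exfalso
          have hcux : G.Conn b' u x :=
            conn_iff_walk.mpr ⟨l', hl'.mono Set.inter_subset_left⟩
          have hcxz : G.Conn b' x z := hcux.symm.trans hu
          have hcxy : G.Conn b' x y := conn_of_edge (fun h => hb'b h.symm) hb
          exact hnyz (hcxy.symm.trans hcxz)
        · exact conn_iff_walk.mpr ⟨l', hl'.mono Set.inter_subset_right⟩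
      have hss : {u | G.Conn b' u z} ⊂ {u | G.Conn b u y} := by
        refine ⟨hsub, fun hsup => ?_⟩
        exact hnyz (hsup (Conn.refl : G.Conn b y y))
      have hlt := Set.ncard_lt_ncard hss (Set.toFinite _)
      obtain ⟨u, hu, heu⟩ := ih b' y z hbz (by omega)
      exact ⟨u, hsub hu, heu⟩

theorem Aut.one_toV : (1 : G.Aut).toV = 1 := rfl
theorem Aut.one_toE : (1 : G.Aut).toE = 1 := rfl
theorem Aut.inv_toV (f : G.Aut) : (f⁻¹).toV = f.toV⁻¹ := rfl
theorem Aut.inv_toE (f : G.Aut) : (f⁻¹).toE = f.toE⁻¹ := rfl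

theorem conn_map (f : G.Aut) {b : E} {u w : V} (h : G.Conn b u w) :
    G.Conn (f.toE b) (f.toV u) (f.toV w) := by
  refine Relation.ReflTransGen.lift f.toV ?_ _ _ h
  rintro a c ⟨e, hne, hec⟩
  refine ⟨f.toE e, ?_, ?_⟩
  · simp only [Set.mem_singleton_iff] at hne ⊢
    exact fun h' => hne (f.toE.injective h')
  · rw [f.ends_map, hec, Sym2.map_pair_eq]

theorem conn_map_iff (f : G.Aut) {b : E} {u w : V} :
    G.Conn (f.toE b) (f.toV u) (f.toV w) ↔ G.Conn b u w := by
  constructor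
  · intro h
    have h2 := conn_map f⁻¹ h
    rw [Aut.inv_toE, Aut.inv_toV] at h2
    simpa using h2
  · exact conn_map f

theorem bridge_map (f : G.Aut) {b : E} (hb : G.IsBridge b) : G.IsBridge (f.toE b) := by
  obtain ⟨x, y, hxy, hn⟩ := hb
  refine ⟨f.toV x, f.toV y, by rw [f.ends_map, hxy, Sym2.map_pair_eq], fun hc => hn ?_⟩
  exact (conn_map_iff f).mp hc

/-- The crucial geometric step: an automorphism fixing a vertex on each side of each
bridge cannot move a vertex across an edge separation. -/
theorem final_aux [Fintype V] [Fintype E] (hconn : G.Connected) (hleaf : G.Leafless)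
    (f : G.Aut) (hfix : ∀ u, (∃ e, ¬ G.IsBridge e ∧ u ∈ G.ends e) → f.toV u = u)
    {b : E} {x y v : V} (hb : G.IsBridge b) (hxy : G.ends b = s(x, y))
    (hvx : G.Conn b v x) (hfvy : G.Conn b (f.toV v) y) : False := by
  have hnxy : ¬ G.Conn b x y := not_conn_of_bridge hb hxy
  have hdisj : ∀ u, G.Conn b u x → G.Conn b u y → False :=
    fun u h1 h2 => hnxy (h1.symm.trans h2)
  obtain ⟨q, hqy, hqf⟩ : ∃ q, G.Conn b q y ∧ f.toV q = q := by
    obtain ⟨q, hq, he⟩ := side_has_nonbridge hleaf _ b x y hxy le_rfl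
    exact ⟨q, hq, hfix q he⟩
  obtain ⟨p, hpx, hpf⟩ : ∃ p, G.Conn b p x ∧ f.toV p = p := by
    obtain ⟨p, hp, he⟩ :=
      side_has_nonbridge hleaf _ b y x (hxy.trans Sym2.eq_swap) le_rfl
    exact ⟨p, hp, hfix p he⟩
  have hb' : G.IsBridge (f.toE b) := bridge_map f hb
  have hxy' : G.ends (f.toE b) = s(f.toV x, f.toV y) := by
    rw [f.ends_map, hxy, Sym2.map_pair_eq]
  have hnxy' : ¬ G.Conn (f.toE b) (f.toV x) (f.toV y) :=
    fun h => hnxy ((conn_map_iff f).mp h)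
  rcases conn_two hconn hxy (f.toV x) with hfxX | hfxY
  · rcases conn_two hconn hxy (f.toV y) with hfyX | hfyY
    · -- both f x and f y on the x-side of b
      have sub1 : ∀ u, G.Conn b u y → G.Conn (f.toE b) u y := by
        intro u hu
        obtain ⟨l, hl⟩ := conn_iff_walk.mp hu
        rcases hl.split hxy' with ⟨l', hl'⟩ | ⟨l', hl'⟩ | ⟨l', hl'⟩
        · exact conn_iff_walk.mpr ⟨l', hl'.mono Set.inter_subset_right⟩
        · exact absurd ((conn_iff_walk.mpr
            ⟨l', hl'.mono Set.inter_subset_left⟩ : G.Conn b u (f.toV x)).trans hfxX)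
            fun h => hdisj u h hu
        · exact absurd ((conn_iff_walk.mpr
            ⟨l', hl'.mono Set.inter_subset_left⟩ : G.Conn b u (f.toV y)).trans hfyX)
            fun h => hdisj u h hu
      have hq1 : G.Conn (f.toE b) q y := sub1 q hqy
      have hq2 : G.Conn (f.toE b) q (f.toV y) := hqf ▸ conn_map f hqy
      have hfv1 : G.Conn (f.toE b) (f.toV v) y := sub1 _ hfvy
      have hfv2 : G.Conn (f.toE b) (f.toV v) (f.toV x) := conn_map f hvx
      exact hnxy' (hfv2.symm.trans ((hfv1.trans hq1.symm).trans hq2))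
    · -- f x on x-side, f y on y-side
      by_cases hbb : f.toE b = b
      · have hfv2 : G.Conn b (f.toV v) (f.toV x) := hbb ▸ conn_map f hvx
        exact hdisj (f.toV v) (hfv2.trans hfxX) hfvy
      · exact hdisj (f.toV x) hfxX ((conn_of_edge hbb hxy').trans hfyY)
  · rcases conn_two hconn hxy (f.toV y) with hfyX | hfyY
    · -- f x on y-side, f y on x-side
      by_cases hbb : f.toE b = b
      · have hq2 : G.Conn b q (f.toV y) := by
          have := conn_map f hqy
          rwa [hbb, hqf] at this
        exact hdisj q (hq2.trans hfyX) hqy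
      · exact hdisj (f.toV x) ((conn_of_edge hbb hxy').trans hfyX) hfxY
    · -- both f x and f y on the y-side of b
      have sub1 : ∀ u, G.Conn b u x → G.Conn (f.toE b) u x := by
        intro u hu
        obtain ⟨l, hl⟩ := conn_iff_walk.mp hu
        rcases hl.split hxy' with ⟨l', hl'⟩ | ⟨l', hl'⟩ | ⟨l', hl'⟩
        · exact conn_iff_walk.mpr ⟨l', hl'.mono Set.inter_subset_right⟩
        · exact absurd ((conn_iff_walk.mpr
            ⟨l', hl'.mono Set.inter_subset_left⟩ : G.Conn b u (f.toV x)).trans hfxY)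
            fun h => hdisj u hu h
        · exact absurd ((conn_iff_walk.mpr
            ⟨l', hl'.mono Set.inter_subset_left⟩ : G.Conn b u (f.toV y)).trans hfyY)
            fun h => hdisj u hu h
      -- X ⊆ fX, where fX is the f x side of f b; conclude by cardinality X = fX
      have hp1 : G.Conn (f.toE b) p x := sub1 p hpx
      have hp2 : G.Conn (f.toE b) p (f.toV x) := hpf ▸ conn_map f hpx
      have hXsub : {u | G.Conn b u x} ⊆ {u | G.Conn (f.toE b) u (f.toV x)} := by
        intro u hu
        exact ((sub1 u hu).trans hp1.symm).trans hp2
      have himg : {u | G.Conn (f.toE b) u (f.toV x)} = f.toV '' {u | G.Conn b u x} := by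
        ext u
        constructor
        · intro h
          refine ⟨f.toV⁻¹ u, ?_, by simp⟩
          have := (conn_map_iff f (u := f.toV⁻¹ u) (w := x) (b := b)).mp
          rw [show f.toV (f.toV⁻¹ u) = u by simp] at this
          exact this h
        · rintro ⟨w, hw, rfl⟩
          exact conn_map f hw
      have hcard : {u | G.Conn (f.toE b) u (f.toV x)}.ncard =
          {u | G.Conn b u x}.ncard := by
        rw [himg, Set.ncard_image_of_injective _ f.toV.injective]
      have hEq := Set.eq_of_subset_of_ncard_le hXsub hcard.le (Set.toFinite _)
      have hfvX : f.toV v ∈ {u | G.Conn b u x} := by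
        rw [hEq]
        exact conn_map f hvx
      exact hdisj _ hfvX hfvy

end Multigraph

/-- Let `G` be a connected leafless graph and `S` the set of all bridges
of `G` (a set invariant under every automorphism).  Then the induced group homomorphism
`Aut(G) → Aut(G/S)` — i.e., any group homomorphism commuting with the projection
`V_G → V_{G/S}` and with the inclusion `E_{G/S} → E_G` — is injective. -/
theorem aut_to_aut_contract_bridges_injective {V E : Type} [Fintype V] [Fintype E]
    (G : Multigraph V E) (hconn : G.Connected) (hleaf : G.Leafless)
    (Φ : G.Aut →* (G.contract {e | G.IsBridge e}).Aut)
    (hΦV : ∀ (f : G.Aut) (v : V),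
      (Φ f).toV (Quot.mk (G.contractRel {e | G.IsBridge e}) v) =
        Quot.mk (G.contractRel {e | G.IsBridge e}) (f.toV v))
    (hΦE : ∀ (f : G.Aut) (e : {e : E // e ∉ {e | G.IsBridge e}}),
      ((Φ f).toE e : E) = f.toE (e : E)) :
    Function.Injective Φ := by
  rw [injective_iff_map_eq_one]
  intro f hf
  have h1 : ∀ e, ¬ G.IsBridge e → f.toE e = e := by
    intro e he
    have h := hΦE f ⟨e, he⟩
    rw [hf] at h
    exact h.symm
  have hclass : ∀ v, Quot.mk (G.contractRel {e | G.IsBridge e}) (f.toV v) =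
      Quot.mk (G.contractRel {e | G.IsBridge e}) v := by
    intro v
    have h := hΦV f v
    rw [hf] at h
    exact h.symm
  have hsep : ∀ u w : V, u ≠ w →
      Quot.mk (G.contractRel {e | G.IsBridge e}) u =
        Quot.mk (G.contractRel {e | G.IsBridge e}) w →
      ∃ b, G.IsBridge b ∧ ¬ G.Conn b u w := by
    intro u w hne hq
    obtain ⟨l, hl⟩ := Multigraph.walk_of_eqvGen (Quot.eq.mp hq)
    exact Multigraph.exists_sep_bridge l.length le_rfl hl hne
  have hfix : ∀ u, (∃ e, ¬ G.IsBridge e ∧ u ∈ G.ends e) → f.toV u = u := by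
    rintro u ⟨e, hbe, hue⟩
    obtain ⟨w, hew⟩ := Sym2.mem_iff_exists.mp hue
    have hmap := f.ends_map e
    rw [h1 e hbe, hew, Sym2.map_pair_eq] at hmap
    rcases Sym2.eq_iff.mp hmap with ⟨h3, _⟩ | ⟨h3, h4⟩
    · exact h3.symm
    · by_cases huw : u = w
      · rw [← huw] at h3
        exact h3.symm
      · have hq : Quot.mk (G.contractRel {e | G.IsBridge e}) u =
            Quot.mk (G.contractRel {e | G.IsBridge e}) w := by
          rw [h4]
          exact (hclass u).symm
        obtain ⟨b0, hb0, hnc⟩ := hsep u w huw hq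
        exact absurd (Multigraph.conn_of_edge (fun h => hbe (by rw [h]; exact hb0)) hew) hnc
  have hV : ∀ v, f.toV v = v := by
    intro v
    by_contra hne
    obtain ⟨b, hb, hnc⟩ := hsep v (f.toV v) (fun h => hne h.symm) (hclass v).symm
    obtain ⟨x, y, hxy⟩ := Multigraph.exists_pair_eq (G.ends b)
    rcases Multigraph.conn_two hconn hxy v with hvx | hvy
    · rcases Multigraph.conn_two hconn hxy (f.toV v) with hfx | hfy
      · exact hnc (hvx.trans hfx.symm)
      · exact Multigraph.final_aux hconn hleaf f hfix hb hxy hvx hfy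
    · rcases Multigraph.conn_two hconn hxy (f.toV v) with hfx | hfy
      · exact Multigraph.final_aux hconn hleaf f hfix hb (hxy.trans Sym2.eq_swap) hvy hfx
      · exact hnc (hvy.trans hfy.symm)
  have hE : ∀ e, f.toE e = e := by
    intro e
    by_cases hbe : G.IsBridge e
    · by_contra hne
      have hmap := f.ends_map e
      obtain ⟨x, y, hxy⟩ := Multigraph.exists_pair_eq (G.ends e)
      rw [hxy, Sym2.map_pair_eq, hV, hV] at hmap
      exact Multigraph.not_bridge_of_parallel hne (hmap.trans hxy.symm) hbe
    · exact h1 e hbe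
  exact Multigraph.Aut.ext' (Equiv.ext hV) (Equiv.ext hE)
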